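/- Let W : [0,1]² → [0,1] be defined by W(x,y) = 0 if (x,y) ∈ [2/3,1]×[2/3,1] and W(x,y) = 1 otherwise. Then μ(W) = (1+√3)/3 and ν(W) = (1−√3)/3; in particular, spr(W) = 2/√3. -/

import Mathlib

open MeasureTheory

/-- Lebesgue measure restricted to the unit square `[0,1]²`. -/
noncomputable def unitSq : Measure (ℝ × ℝ) :=
  volume.restrict (Set.Icc (0 : ℝ) 1 ×ˢ Set.Icc (0 : ℝ) 1)

/-- Lebesgue measure restricted to the unit interval `[0,1]`. -/
noncomputable def unitInt : Measure ℝ := volume.restrict (Set.Icc (0 : ℝ) 1)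

/-- A graphon: a measurable function with values in `[0,1]` which is symmetric
almost everywhere on `[0,1]²`. -/
def IsGraphon (W : ℝ → ℝ → ℝ) : Prop :=
  Measurable (Function.uncurry W) ∧ (∀ x y, W x y ∈ Set.Icc (0 : ℝ) 1) ∧
    (∀ᵐ p : ℝ × ℝ ∂unitSq, W p.1 p.2 = W p.2 p.1)

/-- A unit function of `L²[0,1]`: measurable with `∫₀¹ f² = 1`. -/
def IsUnitL2 (f : ℝ → ℝ) : Prop :=
  Measurable f ∧ (∫ x in Set.Icc (0 : ℝ) 1, (f x) ^ 2) = 1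

/-- The quadratic form `∫₀¹∫₀¹ W(x,y) f(x) f(y) dx dy`. -/
noncomputable def quadForm (W : ℝ → ℝ → ℝ) (f : ℝ → ℝ) : ℝ :=
  ∫ x in Set.Icc (0 : ℝ) 1, ∫ y in Set.Icc (0 : ℝ) 1, W x y * f x * f y

/-- `μ(W)`, the maximum eigenvalue of the kernel operator associated to `W`. -/
noncomputable def graphonMu (W : ℝ → ℝ → ℝ) : ℝ :=
  sSup {r : ℝ | ∃ f : ℝ → ℝ, IsUnitL2 f ∧ r = quadForm W f}

/-- `ν(W)`, the minimum eigenvalue of the kernel operator associated to `W`. -/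
noncomputable def graphonNu (W : ℝ → ℝ → ℝ) : ℝ :=
  sInf {r : ℝ | ∃ f : ℝ → ℝ, IsUnitL2 f ∧ r = quadForm W f}

/-- The spread `spr(W) = μ(W) − ν(W)` of a graphon. -/
noncomputable def graphonSpr (W : ℝ → ℝ → ℝ) : ℝ := graphonMu W - graphonNu W

/-- `f` is a `lam`-eigenfunction of the kernel operator of `W`. -/
def IsEigenfunction (W : ℝ → ℝ → ℝ) (lam : ℝ) (f : ℝ → ℝ) : Prop :=
  ∀ᵐ x ∂unitInt, (∫ y in Set.Icc (0 : ℝ) 1, W x y * f y) = lam * f x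

open Set

/-! ### Auxiliary lemmas -/

namespace ExtremalAux

local notation "I01" => Set.Icc (0:ℝ) 1
local notation "Bset" => Set.Icc (2/3:ℝ) 1
local notation "Aset" => Set.Ico (0:ℝ) (2/3)

lemma volB : (volume (Set.Icc (2/3:ℝ) 1)).toReal = 1/3 := by
  rw [Real.volume_Icc, ENNReal.toReal_ofReal] <;> norm_num

lemma volA : (volume (Set.Ico (0:ℝ) (2/3))).toReal = 2/3 := by
  rw [Real.volume_Ico, ENNReal.toReal_ofReal] <;> norm_num

lemma volI : (volume (Set.Icc (0:ℝ) 1)).toReal = 1 := by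
  rw [Real.volume_Icc, ENNReal.toReal_ofReal] <;> norm_num

lemma AunionB : Aset ∪ Bset = I01 := by
  rw [Set.Ico_union_Icc_eq_Icc] <;> norm_num

lemma AdisjB : Disjoint Aset Bset := by
  apply Set.disjoint_left.mpr
  rintro x ⟨_, hx⟩ ⟨hx', _⟩; exact absurd hx' (not_le.mpr hx)

/-- Cauchy–Schwarz on a set of finite positive measure. -/
lemma sq_setIntegral_le (f : ℝ → ℝ) {s : Set ℝ} (hs : MeasurableSet s)
    (h2 : IntegrableOn (fun x => (f x)^2) s) (h1 : IntegrableOn f s)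
    {c : ℝ} (hc : (volume s).toReal = c) (hcpos : 0 < c) :
    (∫ x in s, f x)^2 ≤ c * ∫ x in s, (f x)^2 := by
  set a := ∫ x in s, f x with ha
  set S := ∫ x in s, (f x)^2 with hS
  set t : ℝ := a / c with ht
  have hvol : volume s ≠ ⊤ := by
    intro h; rw [h] at hc; simp at hc; exact hcpos.ne' hc.symm
  have hconst : IntegrableOn (fun _ : ℝ => t^2) s :=
    (integrableOn_const_iff).mpr (Or.inr (lt_top_iff_ne_top.mpr hvol))
  have h0 : 0 ≤ ∫ x in s, (f x - t)^2 :=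
    setIntegral_nonneg hs (fun _ _ => sq_nonneg _)
  have hexp : ∫ x in s, (f x - t)^2 = S - 2*t*a + t^2*c := by
    have : ∀ x, (f x - t)^2 = ((f x)^2 - (2*t) * f x) + t^2 := by intro x; ring
    rw [show (fun x => (f x - t)^2) = fun x => ((f x)^2 - (2*t) * f x) + t^2 from funext this]
    have e1 := integral_add ((h2.sub (h1.const_mul (2*t)))) hconst
    have e2 := integral_sub h2 (h1.const_mul (2*t))
    simp only [Pi.sub_apply, integral_const_mul, integral_const, smul_eq_mul,
      Measure.restrict_apply_univ, measureReal_restrict_apply_univ, measureReal_def, hc] at e1 e2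
    rw [e1, e2]; ring
  rw [hexp] at h0
  have hc0 : c ≠ 0 := hcpos.ne'
  have hta : t * c = a := by rw [ht]; field_simp
  nlinarith [h0, sq_nonneg (a - t*c), hcpos]

/-- The quadratic form of the step graphon, for integrable `f`. -/
lemma quadForm_eq (W : ℝ → ℝ → ℝ)
    (hW0 : ∀ x ∈ Set.Icc (2/3 : ℝ) 1, ∀ y ∈ Set.Icc (2/3 : ℝ) 1, W x y = 0)
    (hW1 : ∀ x y : ℝ, ¬(x ∈ Set.Icc (2/3 : ℝ) 1 ∧ y ∈ Set.Icc (2/3 : ℝ) 1) → W x y = 1)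
    (f : ℝ → ℝ) (hint : IntegrableOn f I01) :
    quadForm W f = (∫ x in I01, f x)^2 - (∫ x in Bset, f x)^2 := by
  set g : ℝ → ℝ := (Bset).indicator f with hg
  have hkey : ∀ x y : ℝ, W x y * f x * f y = f x * f y - g x * g y := by
    intro x y
    by_cases hx : x ∈ Bset <;> by_cases hy : y ∈ Bset
    · rw [hW0 x hx y hy, hg]
      simp [Set.indicator_of_mem hx, Set.indicator_of_mem hy]
    · rw [hW1 x y (by tauto), hg]
      simp [Set.indicator_of_notMem hy]
    · rw [hW1 x y (by tauto), hg]
      simp [Set.indicator_of_notMem hx]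
    · rw [hW1 x y (by tauto), hg]
      simp [Set.indicator_of_notMem hx]
  have hgint : IntegrableOn g I01 := hint.indicator measurableSet_Icc
  set T := ∫ x in I01, f x with hT
  set Bv := ∫ x in I01, g x with hBv
  have hBvb : Bv = ∫ x in Bset, f x := by
    rw [hBv, hg, setIntegral_indicator measurableSet_Icc]
    congr 1
    rw [Set.Icc_inter_Icc]
    norm_num
  have hinner : ∀ x : ℝ, (∫ y in I01, W x y * f x * f y) = f x * T - g x * Bv := by
    intro x
    have : (fun y => W x y * f x * f y) = fun y => f x * f y - g x * g y := by
      funext y; rw [hkey x y]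
    rw [this, integral_sub (hint.const_mul (f x)) (hgint.const_mul (g x)),
      integral_const_mul, integral_const_mul]
  have : quadForm W f = ∫ x in I01, (f x * T - g x * Bv) := by
    unfold quadForm
    exact integral_congr_ae (Filter.Eventually.of_forall (fun x => hinner x))
  rw [this, integral_sub (hint.mul_const T) (hgint.mul_const Bv),
    integral_mul_const, integral_mul_const, ← hT, ← hBv, hBvb]
  ring

/-- The step function with value `α` off `[2/3,1]` and `β` on it. -/
noncomputable def stepf (α β : ℝ) : ℝ → ℝ :=
  fun x => (Set.Icc (2/3:ℝ) 1).indicator (fun _ => β - α) x + α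

lemma stepf_measurable (α β : ℝ) : Measurable (stepf α β) :=
  ((measurable_const.indicator measurableSet_Icc).add measurable_const)

lemma stepf_integrable (α β : ℝ) : IntegrableOn (stepf α β) I01 := by
  apply Integrable.add
  · exact ((integrableOn_const_iff).mpr (Or.inr (by rw [Real.volume_Icc]; exact ENNReal.ofReal_lt_top))).indicator measurableSet_Icc
  · exact (integrableOn_const_iff).mpr (Or.inr (by rw [Real.volume_Icc]; exact ENNReal.ofReal_lt_top))

lemma stepf_int_I (α β : ℝ) : ∫ x in I01, stepf α β x = 2/3*α + 1/3*β := by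
  unfold stepf
  rw [integral_add (((integrableOn_const_iff (C := β - α)).mpr (Or.inr (by rw [Real.volume_Icc]; exact ENNReal.ofReal_lt_top))).indicator measurableSet_Icc)
    ((integrableOn_const_iff (C := α)).mpr (Or.inr (by rw [Real.volume_Icc]; exact ENNReal.ofReal_lt_top)))]
  rw [setIntegral_indicator measurableSet_Icc, integral_const, integral_const]
  rw [show Set.Icc (0:ℝ) 1 ∩ Set.Icc (2/3:ℝ) 1 = Set.Icc (2/3:ℝ) 1 by rw [Set.Icc_inter_Icc]; norm_num]
  simp only [Measure.restrict_apply_univ, measureReal_restrict_apply_univ, measureReal_def, volB, volI, smul_eq_mul]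
  ring

lemma stepf_int_B (α β : ℝ) : ∫ x in Bset, stepf α β x = 1/3*β := by
  unfold stepf
  rw [integral_add (((integrableOn_const_iff (C := β - α)).mpr (Or.inr (by rw [Real.volume_Icc]; exact ENNReal.ofReal_lt_top))).indicator measurableSet_Icc)
    ((integrableOn_const_iff (C := α)).mpr (Or.inr (by rw [Real.volume_Icc]; exact ENNReal.ofReal_lt_top)))]
  rw [setIntegral_indicator measurableSet_Icc, integral_const, integral_const]
  rw [Set.inter_self]
  simp only [Measure.restrict_apply_univ, measureReal_restrict_apply_univ, measureReal_def, volB, smul_eq_mul]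
  ring

lemma stepf_int_sq (α β : ℝ) : ∫ x in I01, (stepf α β x)^2 = 2/3*α^2 + 1/3*β^2 := by
  have hpt : ∀ x, (stepf α β x)^2
      = (Set.Icc (2/3:ℝ) 1).indicator (fun _ => β^2 - α^2) x + α^2 := by
    intro x
    unfold stepf
    by_cases hx : x ∈ Set.Icc (2/3:ℝ) 1
    · simp only [Set.indicator_of_mem hx]; ring
    · simp [Set.indicator_of_notMem hx]
  rw [show (fun x => (stepf α β x)^2) = fun x => (Set.Icc (2/3:ℝ) 1).indicator (fun _ => β^2 - α^2) x + α^2 from funext hpt]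
  rw [integral_add (((integrableOn_const_iff (C := β^2 - α^2)).mpr (Or.inr (by rw [Real.volume_Icc]; exact ENNReal.ofReal_lt_top))).indicator measurableSet_Icc)
    ((integrableOn_const_iff (C := α^2)).mpr (Or.inr (by rw [Real.volume_Icc]; exact ENNReal.ofReal_lt_top)))]
  rw [setIntegral_indicator measurableSet_Icc, integral_const, integral_const]
  rw [show Set.Icc (0:ℝ) 1 ∩ Set.Icc (2/3:ℝ) 1 = Set.Icc (2/3:ℝ) 1 by rw [Set.Icc_inter_Icc]; norm_num]
  simp only [Measure.restrict_apply_univ, measureReal_restrict_apply_univ, measureReal_def, volB, volI, smul_eq_mul]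
  ring

end ExtremalAux

/-- The extremal graphon, vanishing on `[2/3,1]²` and equal to `1` elsewhere, has
`μ = (1+√3)/3`, `ν = (1−√3)/3`, and spread `2/√3`. -/
theorem extremal_stepgraphon_eigenvalues (W : ℝ → ℝ → ℝ)
    (hW0 : ∀ x ∈ Set.Icc (2/3 : ℝ) 1, ∀ y ∈ Set.Icc (2/3 : ℝ) 1, W x y = 0)
    (hW1 : ∀ x y : ℝ, ¬(x ∈ Set.Icc (2/3 : ℝ) 1 ∧ y ∈ Set.Icc (2/3 : ℝ) 1) → W x y = 1) :
    graphonMu W = (1 + Real.sqrt 3) / 3 ∧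
    graphonNu W = (1 - Real.sqrt 3) / 3 ∧
    graphonSpr W = 2 / Real.sqrt 3 := by
  open ExtremalAux in
  set s : ℝ := Real.sqrt 3 with hsdef
  have hs2 : s^2 = 3 := Real.sq_sqrt (by norm_num)
  have hs0 : 0 ≤ s := Real.sqrt_nonneg 3
  have hs1 : 1 < s := by nlinarith
  have hAsubI : Set.Ico (0:ℝ) (2/3) ⊆ Set.Icc (0:ℝ) 1 := by
    intro x hx; exact ⟨hx.1, le_trans hx.2.le (by norm_num)⟩
  have hBsubI : Set.Icc (2/3:ℝ) 1 ⊆ Set.Icc (0:ℝ) 1 :=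
    Set.Icc_subset_Icc (by norm_num) le_rfl
  -- the set whose sSup/sInf we study
  set S : Set ℝ := {r : ℝ | ∃ f : ℝ → ℝ, IsUnitL2 f ∧ r = quadForm W f} with hSdef
  -- upper and lower bounds for every element of S
  have hbound : ∀ r ∈ S, (1 - s)/3 ≤ r ∧ r ≤ (1 + s)/3 := by
    rintro r ⟨f, ⟨hfm, hfu⟩, rfl⟩
    have h2 : IntegrableOn (fun x => (f x)^2) (Set.Icc (0:ℝ) 1) := by
      by_contra h
      rw [integral_undef h] at hfu
      norm_num at hfu
    have h1 : IntegrableOn f (Set.Icc (0:ℝ) 1) := by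
      have hgint : IntegrableOn (fun x => (f x)^2 + 1) (Set.Icc (0:ℝ) 1) :=
        h2.add ((integrableOn_const_iff).mpr
          (Or.inr (by rw [Real.volume_Icc]; exact ENNReal.ofReal_lt_top)))
      apply Integrable.mono' hgint (hfm.aestronglyMeasurable.restrict)
      refine Filter.Eventually.of_forall (fun x => ?_)
      rw [Real.norm_eq_abs]
      nlinarith [sq_abs (f x), sq_nonneg (|f x| - 1)]
    set a := ∫ x in Set.Ico (0:ℝ) (2/3), f x with hadef
    set b := ∫ x in Set.Icc (2/3:ℝ) 1, f x with hbdef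
    have hT : ∫ x in Set.Icc (0:ℝ) 1, f x = a + b := by
      rw [← AunionB, setIntegral_union AdisjB measurableSet_Icc
        (h1.mono_set hAsubI) (h1.mono_set hBsubI)]
    have hsq : (∫ x in Set.Ico (0:ℝ) (2/3), (f x)^2)
        + (∫ x in Set.Icc (2/3:ℝ) 1, (f x)^2) = 1 := by
      have : ∫ x in Set.Icc (0:ℝ) 1, (f x)^2
          = (∫ x in Set.Ico (0:ℝ) (2/3), (f x)^2)
            + (∫ x in Set.Icc (2/3:ℝ) 1, (f x)^2) := by
        rw [← AunionB, setIntegral_union AdisjB measurableSet_Icc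
          (h2.mono_set hAsubI) (h2.mono_set hBsubI)]
      rw [← this]; exact hfu
    have hCSa : a^2 ≤ 2/3 * ∫ x in Set.Ico (0:ℝ) (2/3), (f x)^2 :=
      sq_setIntegral_le f measurableSet_Ico (h2.mono_set hAsubI)
        (h1.mono_set hAsubI) volA (by norm_num)
    have hCSb : b^2 ≤ 1/3 * ∫ x in Set.Icc (2/3:ℝ) 1, (f x)^2 :=
      sq_setIntegral_le f measurableSet_Icc (h2.mono_set hBsubI)
        (h1.mono_set hBsubI) volB (by norm_num)
    have hQ : quadForm W f = (a + b)^2 - b^2 := by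
      rw [quadForm_eq W hW0 hW1 f h1, hT]
    have hSqnn : 0 ≤ ∫ x in Set.Ico (0:ℝ) (2/3), (f x)^2 :=
      setIntegral_nonneg measurableSet_Ico (fun _ _ => sq_nonneg _)
    have hSqnn' : 0 ≤ ∫ x in Set.Icc (2/3:ℝ) 1, (f x)^2 :=
      setIntegral_nonneg measurableSet_Icc (fun _ _ => sq_nonneg _)
    have hell : 3/2 * a^2 + 3 * b^2 ≤ 1 := by nlinarith
    constructor
    · rw [hQ]; nlinarith [sq_nonneg (a + (s-1)*b)]
    · rw [hQ]; nlinarith [sq_nonneg (a - (s+1)*b)]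
  -- the two extremal step functions
  have hmem : ∀ α β : ℝ, 2/3*α^2 + 1/3*β^2 = 1 →
      (2/3*α + 1/3*β)^2 - (1/3*β)^2 ∈ S := by
    intro α β hunit
    refine ⟨stepf α β, ⟨stepf_measurable α β, by rw [stepf_int_sq]; exact hunit⟩, ?_⟩
    rw [quadForm_eq W hW0 hW1 _ (stepf_integrable α β), stepf_int_I, stepf_int_B]
  have hαp : (Real.sqrt ((3+s)/4))^2 = (3+s)/4 :=
    Real.sq_sqrt (show (0:ℝ) ≤ (3+s)/4 by nlinarith)
  have hαm : (Real.sqrt ((3-s)/4))^2 = (3-s)/4 :=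
    Real.sq_sqrt (show (0:ℝ) ≤ (3-s)/4 by nlinarith)
  set αp : ℝ := Real.sqrt ((3+s)/4) with hαpdef
  set αm : ℝ := Real.sqrt ((3-s)/4) with hαmdef
  have hmemp : (1 + s)/3 ∈ S := by
    have h := hmem αp ((s-1)*αp) (by linear_combination ((6-2*s)/3)*hαp + (αp^2/3 - 1/6)*hs2)
    have hval : (2/3*αp + 1/3*((s-1)*αp))^2 - (1/3*((s-1)*αp))^2 = (1+s)/3 := by
      linear_combination ((4*s)/9)*hαp + (1/9)*hs2
    rwa [hval] at h
  have hmemm : (1 - s)/3 ∈ S := by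
    have h := hmem αm (-(1+s)*αm) (by linear_combination ((6+2*s)/3)*hαm + (αm^2/3 - 1/6)*hs2)
    have hval : (2/3*αm + 1/3*(-(1+s)*αm))^2 - (1/3*(-(1+s)*αm))^2 = (1-s)/3 := by
      linear_combination (-(4*s)/9)*hαm + (1/9)*hs2
    rwa [hval] at h
  have hne : S.Nonempty := ⟨_, hmemp⟩
  have hbdda : BddAbove S := ⟨(1+s)/3, fun r hr => (hbound r hr).2⟩
  have hbddb : BddBelow S := ⟨(1-s)/3, fun r hr => (hbound r hr).1⟩
  have hmu : graphonMu W = (1 + s)/3 := by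
    refine le_antisymm (csSup_le hne (fun r hr => (hbound r hr).2)) (le_csSup hbdda hmemp)
  have hnu : graphonNu W = (1 - s)/3 := by
    refine le_antisymm (csInf_le hbddb hmemm) (le_csInf hne (fun r hr => (hbound r hr).1))
  refine ⟨hmu, hnu, ?_⟩
  rw [graphonSpr, hmu, hnu]
  have hsne : s ≠ 0 := by positivity
  field_simp
  linear_combination 2*hs2
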